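/- arXiv:1108.5605 — 2 statements merged into one kernel-verified Lean document; each statement's English description precedes it below -/
import Mathlib

section
/- Let (f_n) be a sequence of continuous functions on an exhaustion of a domain Ω ⊆ ℂ by open sets B_1 ⊆ B_2 ⊆ ⋯ with ⋃ B_n = Ω, such that for every n, f_m − f_n is holomorphic on B_n for all m ≥ n, and |f_{n+1}(z) − f_n(z)| ≤ 2^{-n} for all z ∈ closure(B_{n-1}) ⊆ B_n. Then (f_m) converges locally uniformly on Ω to a function f such that f − f_n is holomorphic on B_n for every n. -/
open Filter
open Topology

/-- Convergence step of a Mittag-Leffler/Runge-type construction: given an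
exhaustion `B 0 ⊆ B 1 ⊆ ⋯` of a domain `Ω ⊆ ℂ` by open sets with
`closure (B n) ⊆ B (n+1)`, and continuous functions `f n` on `Ω` such that
`f m − f n` is holomorphic on `B n` for `m ≥ n` and
`‖f (n+2) − f (n+1)‖ ≤ 2^{-(n+1)}` on `closure (B n)`, the sequence `(f n)`
converges locally uniformly on `Ω` to a function `F` such that `F − f n` is
holomorphic on `B n` for every `n`. -/
theorem stmt_3 (Ω : Set ℂ) (B : ℕ → Set ℂ) (f : ℕ → ℂ → ℂ)
    (hopen : ∀ n, IsOpen (B n)) (hmono : ∀ n, B n ⊆ B (n + 1))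
    (hclos : ∀ n, closure (B n) ⊆ B (n + 1))
    (hunion : (⋃ n, B n) = Ω)
    (hcont : ∀ n, ContinuousOn (f n) Ω)
    (hhol : ∀ n m, n ≤ m → DifferentiableOn ℂ (fun z => f m z - f n z) (B n))
    (hbound : ∀ n, ∀ z ∈ closure (B n),
      ‖f (n + 2) z - f (n + 1) z‖ ≤ (2 : ℝ) ^ (-((n : ℤ) + 1))) :
    ∃ F : ℂ → ℂ, TendstoLocallyUniformlyOn f F atTop Ω ∧
      ∀ n, DifferentiableOn ℂ (fun z => F z - f n z) (B n) := by
  -- monotonicity of the exhaustion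
  have hBmono : ∀ a b, a ≤ b → B a ⊆ B b := by
    intro a b hab
    induction b, hab using Nat.le_induction with
    | base => exact subset_rfl
    | succ b hb ih => exact ih.trans (hmono b)
  have hBΩ : ∀ N, B N ⊆ Ω := by
    intro N
    rw [← hunion]
    exact Set.subset_iUnion B N
  -- key distance estimate
  have est : ∀ N, ∀ z ∈ B N, ∀ q, N ≤ q → ∀ p, q ≤ p →
      dist (f (p + 1) z) (f (q + 1) z)
        ≤ 2 * (2 : ℝ) ^ (-(q : ℤ)) - 2 * (2 : ℝ) ^ (-(p : ℤ)) := by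
    intro N z hz q hq p hp
    induction p, hp using Nat.le_induction with
    | base => simp
    | succ p hp ih =>
      have hzp : z ∈ closure (B p) :=
        subset_closure (hBmono N p (hq.trans hp) hz)
      have hb := hbound p z hzp
      have hdist : dist (f (p + 2) z) (f (p + 1) z) ≤ (2 : ℝ) ^ (-((p : ℤ) + 1)) := by
        rw [Complex.dist_eq]; exact hb
      have tri := dist_triangle (f (p + 2) z) (f (p + 1) z) (f (q + 1) z)
      have hpow : (2 : ℝ) ^ (-((p : ℤ) + 1)) + (2 * (2 : ℝ) ^ (-(q : ℤ)) -
          2 * (2 : ℝ) ^ (-(p : ℤ)))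
          ≤ 2 * (2 : ℝ) ^ (-(q : ℤ)) - 2 * (2 : ℝ) ^ (-((p : ℤ) + 1)) := by
        have h1 : (2 : ℝ) ^ (-((p : ℤ) + 1)) = (2 : ℝ) ^ (-(p : ℤ)) / 2 := by
          rw [show -((p:ℤ) + 1) = -(p:ℤ) - 1 by ring,
            zpow_sub₀ (by norm_num : (2:ℝ) ≠ 0)]
          norm_num
        rw [h1]; ring_nf; linarith [zpow_pos (by norm_num : (0:ℝ) < 2) (-(p:ℤ))]
      have : ((p : ℕ) + 1 + 1 : ℕ) = p + 2 := by omega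
      calc dist (f (p + 1 + 1) z) (f (q + 1) z)
          ≤ dist (f (p + 2) z) (f (p + 1) z) + dist (f (p + 1) z) (f (q + 1) z) := by
            rw [this] at tri ⊢; exact tri
        _ ≤ (2 : ℝ) ^ (-((p : ℤ) + 1)) + (2 * (2 : ℝ) ^ (-(q : ℤ)) -
              2 * (2 : ℝ) ^ (-(p : ℤ))) := add_le_add hdist ih
        _ ≤ 2 * (2 : ℝ) ^ (-(q : ℤ)) - 2 * (2 : ℝ) ^ (-((p : ℤ) + 1)) := hpow
        _ = 2 * (2 : ℝ) ^ (-(q : ℤ)) - 2 * (2 : ℝ) ^ (-((p : ℕ) + 1 : ℤ)) := by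
            norm_num
  -- crude estimate for m ≥ n ≥ N + 1
  have est2 : ∀ N, ∀ z ∈ B N, ∀ n, N + 1 ≤ n → ∀ m, n ≤ m →
      dist (f m z) (f n z) ≤ 2 * (2 : ℝ) ^ (-(n : ℤ) + 1) := by
    intro N z hz n hn m hm
    obtain ⟨q, rfl⟩ : ∃ q, n = q + 1 := ⟨n - 1, by omega⟩
    obtain ⟨p, rfl⟩ : ∃ p, m = p + 1 := ⟨m - 1, by omega⟩
    have hq : N ≤ q := by omega
    have hp : q ≤ p := by omega
    have h := est N z hz q hq p hp
    have hpos : (0:ℝ) < 2 * (2 : ℝ) ^ (-(p : ℤ)) := by positivity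
    have hE : (-(((q : ℕ) + 1 : ℕ) : ℤ) + 1) = -(q : ℤ) := by push_cast; ring
    rw [hE]
    linarith
  -- uniform Cauchy on each `B N`
  have hUC : ∀ N, UniformCauchySeqOn f atTop (B N) := by
    intro N
    rw [Metric.uniformCauchySeqOn_iff]
    intro ε hε
    obtain ⟨k, hk⟩ := exists_pow_lt_of_lt_one hε (by norm_num : (1:ℝ)/2 < 1)
    have hklt : 2 * (2 : ℝ) ^ (-((k : ℤ)) - 1) < ε := by
      have h2 : (2 : ℝ) ^ (-((k : ℤ)) - 1) = ((1:ℝ)/2) ^ k / 2 := by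
        rw [zpow_sub₀ (by norm_num : (2:ℝ) ≠ 0)]
        rw [zpow_neg, zpow_natCast, one_div, inv_pow]
        norm_num
      rw [h2]; linarith
    refine ⟨max (N + 1) (k + 2), fun m hm n hn x hx => ?_⟩
    rcases le_total n m with h | h
    · have := est2 N x hx n (le_trans (le_max_left _ _) hn) m h
      have hmono2 : (2 : ℝ) ^ (-(n : ℤ) + 1) ≤ (2 : ℝ) ^ (-((k : ℤ)) - 1) := by
        apply zpow_le_zpow_right₀ (by norm_num : (1:ℝ) ≤ 2)
        have : k + 2 ≤ n := le_trans (le_max_right _ _) hn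
        omega
      calc dist (f m x) (f n x) ≤ 2 * (2 : ℝ) ^ (-(n : ℤ) + 1) := this
        _ ≤ 2 * (2 : ℝ) ^ (-((k : ℤ)) - 1) := by linarith
        _ < ε := hklt
    · have := est2 N x hx m (le_trans (le_max_left _ _) hm) n h
      have hmono2 : (2 : ℝ) ^ (-(m : ℤ) + 1) ≤ (2 : ℝ) ^ (-((k : ℤ)) - 1) := by
        apply zpow_le_zpow_right₀ (by norm_num : (1:ℝ) ≤ 2)
        have : k + 2 ≤ m := le_trans (le_max_right _ _) hm
        omega
      rw [dist_comm]
      calc dist (f n x) (f m x) ≤ 2 * (2 : ℝ) ^ (-(m : ℤ) + 1) := this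
        _ ≤ 2 * (2 : ℝ) ^ (-((k : ℤ)) - 1) := by linarith
        _ < ε := hklt
  -- pointwise limit
  have hex : ∀ z ∈ Ω, ∃ L, Tendsto (fun n => f n z) atTop (𝓝 L) := by
    intro z hz
    rw [← hunion] at hz
    obtain ⟨_, ⟨N, rfl⟩, hzN⟩ := hz
    exact cauchySeq_tendsto_of_complete ((hUC N).cauchySeq hzN)
  classical
  set F : ℂ → ℂ := fun z =>
    if h : ∃ L, Tendsto (fun n => f n z) atTop (𝓝 L) then h.choose else 0 with hF
  have htend : ∀ z ∈ Ω, Tendsto (fun n => f n z) atTop (𝓝 (F z)) := by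
    intro z hz
    have h := hex z hz
    simp only [hF, dif_pos h]
    exact h.choose_spec
  have hUnif : ∀ N, TendstoUniformlyOn f F atTop (B N) := fun N =>
    (hUC N).tendstoUniformlyOn_of_tendsto (fun z hz => htend z (hBΩ N hz))
  refine ⟨F, ?_, ?_⟩
  · intro u hu x hx
    rw [← hunion] at hx
    obtain ⟨_, ⟨N, rfl⟩, hxN⟩ := hx
    exact ⟨B N, mem_nhdsWithin_of_mem_nhds ((hopen N).mem_nhds hxN), hUnif N u hu⟩
  · intro n
    have hTLU : TendstoLocallyUniformlyOn (fun m z => f m z - f n z)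
        (fun z => F z - f n z) atTop (B n) := by
      rw [Metric.tendstoLocallyUniformlyOn_iff]
      intro ε hε x hx
      refine ⟨B n, self_mem_nhdsWithin, ?_⟩
      have := (Metric.tendstoUniformlyOn_iff.mp (hUnif n)) ε hε
      filter_upwards [this] with m hm y hy
      simpa [dist_sub_right] using hm y hy
    refine hTLU.differentiableOn ?_ (hopen n)
    filter_upwards [eventually_ge_atTop n] with m hm
    exact hhol n m hm
end

section
/- Every holomorphic function on ℂP¹ \ {0, ∞} ≅ ℂ \ {0} decomposes as η_0 + η_1 where η_0 extends holomorphically to ℂP¹ \ {∞} and η_1 extends holomorphically to ℂP¹ \ {0}; equivalently, the first Čech cohomology of the structure sheaf O with respect to the two-set cover {ℂP¹ \ {∞}, ℂP¹ \ {0}} of ℂP¹ vanishes. -/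
open Filter Bornology Metric Set Complex

/-- Independence of radius for the Cauchy integral over circles in the annulus. -/
lemma aux_indep (σ : ℂ → ℂ) (hhol : DifferentiableOn ℂ σ {(0 : ℂ)}ᶜ)
    {r R : ℝ} {z : ℂ} (h0 : 0 < r) (hle : r ≤ R) (hz : ‖z‖ < r) :
    (∮ w in C(0, R), (w - z)⁻¹ • σ w) = ∮ w in C(0, r), (w - z)⁻¹ • σ w := by
  have key : ∀ w : ℂ, r ≤ ‖w‖ → w ≠ 0 ∧ w - z ≠ 0 := by
    intro w hw
    refine ⟨?_, sub_ne_zero.2 ?_⟩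
    · intro h; rw [h] at hw; simp at hw; linarith
    · intro h; rw [h] at hw; linarith
  refine Complex.circleIntegral_eq_of_differentiable_on_annulus_off_countable h0 hle
    Set.countable_empty ?_ ?_
  · refine ContinuousOn.fun_smul ?_ (hhol.continuousOn.mono ?_)
    · refine (continuousOn_id.sub continuousOn_const).inv₀ ?_
      intro w hw
      have hw' : r ≤ ‖w‖ := by
        have := hw.2; simpa [mem_ball, dist_zero_right, not_lt] using this
      exact (key w hw').2
    · intro w hw
      have hw' : r ≤ ‖w‖ := by
        have := hw.2; simpa [mem_ball, dist_zero_right, not_lt] using this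
      exact (key w hw').1
  · intro w hw
    have hw' : r ≤ ‖w‖ := by
      have h' := hw.1.2
      rw [mem_closedBall, dist_zero_right, not_le] at h'
      exact h'.le
    exact ((differentiableAt_id.sub_const z).inv (key w hw').2).smul
      (hhol.differentiableAt (compl_singleton_mem_nhds (key w hw').1))

/-- Two-circle Cauchy integral formula in the annulus. -/
lemma aux_two_circle (σ : ℂ → ℂ) (hhol : DifferentiableOn ℂ σ {(0 : ℂ)}ᶜ)
    {r R : ℝ} {z : ℂ} (h0 : 0 < r) (hrz : r < ‖z‖) (hzR : ‖z‖ < R) :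
    (2 * Real.pi * Complex.I) • σ z =
      (∮ w in C(0, R), (w - z)⁻¹ • σ w) - ∮ w in C(0, r), (w - z)⁻¹ • σ w := by
  have hz0 : z ≠ 0 := by intro h; rw [h] at hrz; simp at hrz; linarith
  have hle : r ≤ R := le_of_lt (hrz.trans hzR)
  set g : ℂ → ℂ := dslope σ z with hg
  have hgd : DifferentiableOn ℂ g {(0 : ℂ)}ᶜ :=
    (Complex.differentiableOn_dslope (compl_singleton_mem_nhds hz0)).2 hhol
  have key : ∀ w : ℂ, r ≤ ‖w‖ → w ≠ 0 := by
    intro w hw h; rw [h] at hw; simp at hw; linarith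
  -- annulus Cauchy-Goursat for g
  have hann : (∮ w in C(0, R), g w) = ∮ w in C(0, r), g w := by
    refine Complex.circleIntegral_eq_of_differentiable_on_annulus_off_countable h0 hle
      Set.countable_empty (hgd.continuousOn.mono ?_) ?_
    · intro w hw
      refine key w ?_
      have := hw.2; simpa [mem_ball, dist_zero_right, not_lt] using this
    · intro w hw
      refine hgd.differentiableAt (compl_singleton_mem_nhds (key w ?_))
      have h' := hw.1.2
      rw [mem_closedBall, dist_zero_right, not_le] at h'
      exact h'.le
  -- expand g on spheres
  have expand : ∀ ρ : ℝ, 0 < ρ → ρ ≠ ‖z‖ →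
      (∮ w in C(0, ρ), g w) =
        (∮ w in C(0, ρ), (w - z)⁻¹ • σ w) - σ z • ∮ w in C(0, ρ), (w - z)⁻¹ := by
    intro ρ hρ hρz
    have hsphere : ∀ w ∈ sphere (0 : ℂ) ρ, w ≠ z := by
      intro w hw h
      rw [mem_sphere, dist_zero_right] at hw
      exact hρz (h ▸ hw.symm) |>.elim
    have h1 : EqOn g (fun w => (w - z)⁻¹ • σ w - (w - z)⁻¹ • σ z) (sphere (0 : ℂ) ρ) := by
      intro w hw
      have hwz := hsphere w hw
      rw [hg, dslope_of_ne σ hwz, slope_def_field]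
      simp only [div_eq_inv_mul, smul_eq_mul]
      ring
    have hinv : ContinuousOn (fun w : ℂ => (w - z)⁻¹) (sphere (0 : ℂ) ρ) :=
      (continuousOn_id.sub continuousOn_const).inv₀ fun w hw =>
        sub_ne_zero.2 (hsphere w hw)
    have hσc : ContinuousOn σ (sphere (0 : ℂ) ρ) := by
      refine hhol.continuousOn.mono ?_
      intro w hw
      rw [mem_sphere, dist_zero_right] at hw
      intro h; rw [mem_singleton_iff] at h; rw [h] at hw; simp at hw; exact hρ.ne' hw.symm
    have hint1 : CircleIntegrable (fun w : ℂ => (w - z)⁻¹ • σ w) 0 ρ :=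
      (hinv.smul hσc).circleIntegrable hρ.le
    have hint2 : CircleIntegrable (fun w : ℂ => (w - z)⁻¹ • σ z) 0 ρ :=
      (hinv.smul continuousOn_const).circleIntegrable hρ.le
    rw [circleIntegral.integral_congr hρ.le h1, circleIntegral.integral_sub hint1 hint2]
    congr 1
    rw [← circleIntegral.integral_smul]
    refine circleIntegral.integral_congr hρ.le ?_
    intro w _
    simp [smul_eq_mul]; ring
  have hR0 : (0:ℝ) < R := h0.trans_le hle
  have eR : (∮ w in C(0, R), (w - z)⁻¹) = 2 * Real.pi * Complex.I :=
    circleIntegral.integral_sub_inv_of_mem_ball (by simpa [mem_ball, dist_zero_right] using hzR)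
  have er : (∮ w in C(0, r), (w - z)⁻¹) = 0 := by
    refine Complex.circleIntegral_eq_zero_of_differentiable_on_off_countable h0.le
      Set.countable_empty ?_ ?_
    · refine (continuousOn_id.sub continuousOn_const).inv₀ ?_
      intro w hw
      rw [mem_closedBall, dist_zero_right] at hw
      exact sub_ne_zero.2 (fun h => absurd (show ‖z‖ ≤ r by have h' : w = z := h; rw [← h']; exact hw) (not_le.2 hrz))
    · intro w hw
      rw [Set.diff_empty, mem_ball, dist_zero_right] at hw
      exact (differentiableAt_id.sub_const z).inv
        (sub_ne_zero.2 (fun h => absurd (h ▸ hw) (not_lt.2 hrz.le)))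
  have h1 := expand R hR0 hzR.ne'
  have h2 := expand r h0 hrz.ne
  rw [h1, h2, eR, er] at hann
  have := hann
  rw [smul_zero, sub_zero] at this
  rw [smul_eq_mul] at this ⊢
  linear_combination -this

/-- Vanishing of the first Čech cohomology of `O` for the two-set cover
`{ℂP¹ \ {∞}, ℂP¹ \ {0}}` of `ℂP¹`, in concrete terms: every function `σ`
holomorphic on `ℂP¹ \ {0, ∞} ≅ ℂ \ {0}` decomposes as `σ = η₀ + η₁`, where `η₀`
extends holomorphically over `0` (i.e. is entire) and `η₁` is holomorphic on
`ℂ \ {0}` and extends holomorphically over `∞` (it tends to `0` there). -/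
theorem stmt_7 (σ : ℂ → ℂ) (hhol : DifferentiableOn ℂ σ {(0 : ℂ)}ᶜ) :
    ∃ η₀ η₁ : ℂ → ℂ,
      Differentiable ℂ η₀ ∧
      DifferentiableOn ℂ η₁ {(0 : ℂ)}ᶜ ∧
      (∀ z : ℂ, z ≠ 0 → σ z = η₀ z + η₁ z) ∧
      Tendsto η₁ (cobounded ℂ) (nhds 0) := by
  set c : ℂ := (2 * Real.pi * Complex.I : ℂ)⁻¹ with hc
  have h2pi : (2 * Real.pi * Complex.I : ℂ) ≠ 0 := Complex.two_pi_I_ne_zero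
  set η₀ : ℂ → ℂ := fun z => c • ∮ w in C(0, ‖z‖ + 1), (w - z)⁻¹ • σ w with hη₀def
  set η₁ : ℂ → ℂ := fun z => if z = 0 then 0 else σ z - η₀ z with hη₁def
  have hη₀ : Differentiable ℂ η₀ := by
    intro z₀
    set R : ℝ := ‖z₀‖ + 2 with hR
    have hRpos : 0 < R := by positivity
    have hcirc : CircleIntegrable σ 0 R := by
      refine ContinuousOn.circleIntegrable hRpos.le (hhol.continuousOn.mono ?_)
      intro w hw
      rw [mem_sphere, dist_zero_right] at hw
      intro h
      rw [mem_singleton_iff] at h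
      rw [h] at hw
      simp at hw
      exact hRpos.ne' hw.symm
    set Rnn : NNReal := ⟨R, hRpos.le⟩ with hRnn
    have hps := hasFPowerSeriesOn_cauchy_integral (f := σ) (c := 0) (R := Rnn) hcirc
      (by exact_mod_cast hRpos)
    set G : ℂ → ℂ := fun z => c • ∮ w in C(0, (Rnn : ℝ)), (w - z)⁻¹ • σ w with hG
    have hGd : DifferentiableAt ℂ G z₀ := by
      refine (hps.differentiableOn.differentiableAt (IsOpen.mem_nhds EMetric.isOpen_ball ?_))
      rw [Metric.emetric_ball_nnreal, mem_ball, dist_zero_right]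
      show ‖z₀‖ < R
      simp [hR]
    have heq : η₀ =ᶠ[nhds z₀] G := by
      have hb : ball z₀ 1 ∈ nhds z₀ := ball_mem_nhds _ one_pos
      filter_upwards [hb] with z hz
      rw [mem_ball, dist_eq_norm] at hz
      have hz' : ‖z‖ < ‖z₀‖ + 1 := by
        calc ‖z‖ ≤ ‖z - z₀‖ + ‖z₀‖ := by
              simpa using norm_add_le (z - z₀) z₀
          _ < ‖z₀‖ + 1 := by linarith
      have := aux_indep σ hhol (r := ‖z‖ + 1) (R := R) (z := z) (by positivity)
        (by simp only [hR]; linarith) (by linarith)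
      simp only [hη₀def, hG]
      rw [← this]
      rfl
    exact heq.differentiableAt_iff.2 hGd
  have hsum : ∀ z : ℂ, z ≠ 0 → σ z = η₀ z + η₁ z := by
    intro z hz
    simp only [hη₁def, if_neg hz]
    ring
  have hη₁d : DifferentiableOn ℂ η₁ {(0 : ℂ)}ᶜ := by
    refine (hhol.sub hη₀.differentiableOn).congr ?_
    intro z hz
    rw [mem_compl_iff, mem_singleton_iff] at hz
    simp only [hη₁def, if_neg hz]
    rfl
  -- tail formula for large z
  have hkey : ∀ z : ℂ, 1 < ‖z‖ →
      η₁ z = -(c • ∮ w in C(0, 1), (w - z)⁻¹ • σ w) := by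
    intro z hz
    have hz0 : z ≠ 0 := by
      intro h; rw [h] at hz; simp at hz; linarith
    have h2 := aux_two_circle σ hhol (r := 1) (R := ‖z‖ + 1) one_pos hz (by linarith)
    have hσz : σ z = η₀ z - c • ∮ w in C(0, 1), (w - z)⁻¹ • σ w := by
      have : c • ((2 * Real.pi * Complex.I : ℂ) • σ z) = σ z := by
        rw [smul_smul, hc, inv_mul_cancel₀ h2pi, one_smul]
      rw [← this, h2, smul_sub]
    simp only [hη₁def, if_neg hz0]
    rw [hσz]
    ring
  -- bound on sphere
  obtain ⟨M, hM⟩ := (isCompact_sphere (0 : ℂ) 1).exists_bound_of_continuousOn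
    (hhol.continuousOn.mono (by
      intro w hw
      rw [mem_sphere, dist_zero_right] at hw
      intro h
      rw [mem_singleton_iff] at h
      rw [h] at hw
      simp at hw))
  have hM0 : 0 ≤ M := le_trans (norm_nonneg _) (hM 1 (by simp))
  set K : ℝ := ‖c‖ * (2 * Real.pi * M) with hK
  have hbound : ∀ z : ℂ, 1 < ‖z‖ → ‖η₁ z‖ ≤ K / (‖z‖ - 1) := by
    intro z hz
    have hz1 : (0:ℝ) < ‖z‖ - 1 := by linarith
    have hI : ‖∮ w in C(0, 1), (w - z)⁻¹ • σ w‖ ≤ 2 * Real.pi * 1 * (M / (‖z‖ - 1)) := by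
      refine circleIntegral.norm_integral_le_of_norm_le_const zero_le_one ?_
      intro w hw
      rw [mem_sphere, dist_zero_right] at hw
      have hwz : ‖z‖ - 1 ≤ ‖w - z‖ := by
        have := norm_sub_norm_le z w
        rw [norm_sub_rev z w] at this
        linarith [this, le_of_eq hw.symm]
      rw [norm_smul, norm_inv]
      have h1 : ‖w - z‖⁻¹ ≤ (‖z‖ - 1)⁻¹ := by
        apply inv_anti₀ hz1 hwz
      calc ‖w - z‖⁻¹ * ‖σ w‖ ≤ (‖z‖ - 1)⁻¹ * M := by
            apply mul_le_mul h1 (hM w (by simp [mem_sphere, dist_zero_right, hw]))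
              (norm_nonneg _) (by positivity)
        _ = M / (‖z‖ - 1) := by rw [div_eq_inv_mul]
    rw [hkey z hz, norm_neg, norm_smul]
    calc ‖c‖ * ‖∮ w in C(0, 1), (w - z)⁻¹ • σ w‖
        ≤ ‖c‖ * (2 * Real.pi * 1 * (M / (‖z‖ - 1))) :=
          mul_le_mul_of_nonneg_left hI (norm_nonneg _)
      _ = K / (‖z‖ - 1) := by
          rw [hK]
          field_simp
  have hlarge : ∀ᶠ z : ℂ in cobounded ℂ, 1 < ‖z‖ :=
    tendsto_norm_cobounded_atTop.eventually_gt_atTop 1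
  refine ⟨η₀, η₁, hη₀, hη₁d, hsum, ?_⟩
  rw [tendsto_zero_iff_norm_tendsto_zero]
  refine squeeze_zero' (g := fun z : ℂ => K / (‖z‖ - 1)) ?_ ?_ ?_
  · filter_upwards with z using norm_nonneg _
  · filter_upwards [hlarge] with z hz using hbound z hz
  · have h1 : Tendsto (fun z : ℂ => ‖z‖ - 1) (cobounded ℂ) atTop := by
      simpa [sub_eq_add_neg] using
        tendsto_atTop_add_const_right (cobounded ℂ) (-1 : ℝ) tendsto_norm_cobounded_atTop
    exact Tendsto.div_atTop tendsto_const_nhds h1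
end
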